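/- Let F ⊣ U : A → X and L ⊣ R : C → X be adjunctions with U and R fully faithful. The following are equivalent: (i) U factors through R up to isomorphism; (ii) F factors through L up to isomorphism; (iii) the natural transformation ν_U : U → R L U is invertible, where ν is the unit of L ⊣ R; (iv) F ν : F → F R L is invertible. -/

import Mathlib

open CategoryTheory

section helpers
variable {X C : Type*} [Category X] [Category C]
  {L : X ⥤ C} {R : C ⥤ X} (adj : L ⊣ R) [R.Full] [R.Faithful]

lemma isIso_L_map_unit (x : X) : IsIso (L.map (adj.unit.app x)) := by
  have tri : IsIso (L.map (adj.unit.app x) ≫ adj.counit.app (L.obj x)) := by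
    rw [adj.left_triangle_components x]; exact IsIso.id _
  exact IsIso.of_isIso_comp_right _ (adj.counit.app (L.obj x))

lemma isIso_unit_app_R (c : C) : IsIso (adj.unit.app (R.obj c)) := by
  have tri : IsIso (adj.unit.app (R.obj c) ≫ R.map (adj.counit.app c)) := by
    rw [adj.right_triangle_components c]; exact IsIso.id _
  exact IsIso.of_isIso_comp_right _ (R.map (adj.counit.app c))

lemma RL_map_unit_eq (x : X) :
    R.map (L.map (adj.unit.app x)) = adj.unit.app (R.obj (L.obj x)) := by
  rw [← cancel_mono (R.map (adj.counit.app (L.obj x)))]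
  rw [← R.map_comp, adj.left_triangle_components x,
    adj.right_triangle_components (L.obj x)]
  exact R.map_id _

lemma isIso_unit_of_iso {x y : X} (e : x ≅ y) (h : IsIso (adj.unit.app y)) :
    IsIso (adj.unit.app x) := by
  have hn := adj.unit.naturality e.hom
  simp only [Functor.id_map] at hn
  have hx : e.hom ≫ adj.unit.app y ≫ (L ⋙ R).map e.inv = adj.unit.app x := by
    rw [← Category.assoc, hn, Category.assoc, ← Functor.map_comp]
    simp
  rw [← hx]
  have : IsIso ((L ⋙ R).map e.inv) := inferInstance
  exact IsIso.comp_isIso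

lemma unit_cancel {x y : X} (h : IsIso (adj.unit.app y))
    {f g : (L ⋙ R).obj x ⟶ y} (hfg : adj.unit.app x ≫ f = adj.unit.app x ≫ g) :
    f = g := by
  have hL : IsIso ((L ⋙ R).map (adj.unit.app x)) := by
    have := isIso_L_map_unit adj x
    show IsIso (R.map (L.map (adj.unit.app x)))
    exact inferInstance
  have h2 : (L ⋙ R).map f = (L ⋙ R).map g := by
    have h3 := congrArg (L ⋙ R).map hfg
    simp only [Functor.map_comp] at h3
    exact (cancel_epi ((L ⋙ R).map (adj.unit.app x))).mp h3
  have nf := adj.unit.naturality f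
  have ng := adj.unit.naturality g
  simp only [Functor.id_map] at nf ng
  have : f ≫ adj.unit.app y = g ≫ adj.unit.app y := by rw [nf, ng, h2]
  exact (cancel_mono (adj.unit.app y)).mp this

lemma isIso_unit_of_retraction {x : X} (r : (L ⋙ R).obj x ⟶ x)
    (h : adj.unit.app x ≫ r = 𝟙 x) : IsIso (adj.unit.app x) := by
  refine ⟨⟨r, h, ?_⟩⟩
  have nr := adj.unit.naturality r
  simp only [Functor.id_map] at nr
  have he : adj.unit.app ((L ⋙ R).obj x) = R.map (L.map (adj.unit.app x)) :=
    (RL_map_unit_eq adj x).symm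
  rw [nr, he]
  show R.map _ ≫ R.map (L.map r) = _
  rw [← R.map_comp, ← L.map_comp, h]
  simp

end helpers

set_option maxHeartbeats 1000000 in
theorem stmt2 {X A C : Type*} [Category X] [Category A] [Category C]
    (F : X ⥤ A) (U : A ⥤ X) (adjFU : F ⊣ U) [U.Full] [U.Faithful]
    (L : X ⥤ C) (R : C ⥤ X) (adjLR : L ⊣ R) [R.Full] [R.Faithful] :
    ((∃ K : A ⥤ C, Nonempty (K ⋙ R ≅ U)) ↔ (∃ H : C ⥤ A, Nonempty (L ⋙ H ≅ F))) ∧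
    ((∃ H : C ⥤ A, Nonempty (L ⋙ H ≅ F)) ↔ IsIso (Functor.whiskerLeft U adjLR.unit)) ∧
    (IsIso (Functor.whiskerLeft U adjLR.unit) ↔ IsIso (Functor.whiskerRight adjLR.unit F)) := by
  -- (i) → (iii)
  have h1 : (∃ K : A ⥤ C, Nonempty (K ⋙ R ≅ U)) → IsIso (Functor.whiskerLeft U adjLR.unit) := by
    rintro ⟨K, ⟨ψ⟩⟩
    have key : ∀ a : A, IsIso ((Functor.whiskerLeft U adjLR.unit).app a) := by
      intro a
      show IsIso (adjLR.unit.app (U.obj a))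
      exact isIso_unit_of_iso adjLR (ψ.app a).symm (isIso_unit_app_R adjLR (K.obj a))
    haveI := key
    exact NatIso.isIso_of_isIso_app _
  -- (iii) → (i)
  have h2 : IsIso (Functor.whiskerLeft U adjLR.unit) → (∃ K : A ⥤ C, Nonempty (K ⋙ R ≅ U)) := by
    intro h
    exact ⟨U ⋙ L, ⟨Functor.associator U L R ≪≫ (asIso (Functor.whiskerLeft U adjLR.unit)).symm
      ≪≫ U.rightUnitor⟩⟩
  -- (iii) → (iv)
  have h3 : IsIso (Functor.whiskerLeft U adjLR.unit) → IsIso (Functor.whiskerRight adjLR.unit F) := by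
    intro hiii
    have hc : ∀ a : A, IsIso (adjLR.unit.app (U.obj a)) := fun a =>
      (inferInstance : IsIso ((Functor.whiskerLeft U adjLR.unit).app a))
    have key : ∀ x : X, IsIso ((Functor.whiskerRight adjLR.unit F).app x) := by
      intro x
      show IsIso (F.map (adjLR.unit.app x))
      haveI := hc (F.obj x)
      set t : (L ⋙ R).obj x ⟶ U.obj (F.obj x) :=
        (L ⋙ R).map (adjFU.unit.app x) ≫ inv (adjLR.unit.app (U.obj (F.obj x))) with ht
      have hνt : adjLR.unit.app x ≫ t = adjFU.unit.app x := by
        have hn := adjLR.unit.naturality (adjFU.unit.app x)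
        simp only [Functor.id_map, Functor.id_obj] at hn
        rw [ht, ← Category.assoc, ← hn]
        simp
      refine ⟨⟨F.map t ≫ adjFU.counit.app (F.obj x), ?_, ?_⟩⟩
      · rw [← Category.assoc, ← F.map_comp, hνt, adjFU.left_triangle_components x]
        rfl
      · have nε := adjFU.counit.naturality (F.map (adjLR.unit.app x))
        simp only [Functor.id_map, Functor.id_obj, Functor.comp_map] at nε
        have key2 : t ≫ U.map (F.map (adjLR.unit.app x)) = adjFU.unit.app ((L ⋙ R).obj x) := by
          refine unit_cancel adjLR (hc (F.obj ((L ⋙ R).obj x))) ?_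
          rw [← Category.assoc, hνt]
          have hn2 := adjFU.unit.naturality (adjLR.unit.app x)
          simp only [Functor.id_map, Functor.id_obj, Functor.comp_map] at hn2
          exact hn2.symm
        rw [Category.assoc, ← nε, ← Category.assoc, ← F.map_comp, key2,
          adjFU.left_triangle_components ((L ⋙ R).obj x)]
    haveI := key
    exact NatIso.isIso_of_isIso_app _
  -- (iv) → (iii)
  have h4 : IsIso (Functor.whiskerRight adjLR.unit F) → IsIso (Functor.whiskerLeft U adjLR.unit) := by
    intro hiv
    have hc : ∀ x : X, IsIso (F.map (adjLR.unit.app x)) := fun x =>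
      (inferInstance : IsIso ((Functor.whiskerRight adjLR.unit F).app x))
    have key : ∀ a : A, IsIso ((Functor.whiskerLeft U adjLR.unit).app a) := by
      intro a
      show IsIso (adjLR.unit.app (U.obj a))
      haveI := hc (U.obj a)
      refine isIso_unit_of_retraction adjLR
        (adjFU.unit.app ((L ⋙ R).obj (U.obj a)) ≫
          U.map (inv (F.map (adjLR.unit.app (U.obj a))) ≫ adjFU.counit.app a)) ?_
      have nη := adjFU.unit.naturality (adjLR.unit.app (U.obj a))
      simp only [Functor.id_map, Functor.id_obj, Functor.comp_map] at nη
      rw [← Category.assoc, nη, Category.assoc, ← U.map_comp, IsIso.hom_inv_id_assoc,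
        adjFU.right_triangle_components a]
    haveI := key
    exact NatIso.isIso_of_isIso_app _
  -- (ii) → (iv)
  have h5 : (∃ H : C ⥤ A, Nonempty (L ⋙ H ≅ F)) → IsIso (Functor.whiskerRight adjLR.unit F) := by
    rintro ⟨H, ⟨φ⟩⟩
    have key : ∀ x : X, IsIso ((Functor.whiskerRight adjLR.unit F).app x) := by
      intro x
      show IsIso (F.map (adjLR.unit.app x))
      have hLH : IsIso ((L ⋙ H).map (adjLR.unit.app x)) := by
        show IsIso (H.map (L.map (adjLR.unit.app x)))
        have := isIso_L_map_unit adjLR x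
        exact inferInstance
      have nφ := φ.hom.naturality (adjLR.unit.app x)
      simp only [Functor.id_obj] at nφ
      have : IsIso (φ.hom.app x ≫ F.map (adjLR.unit.app x)) := by
        rw [← nφ]
        exact IsIso.comp_isIso
      exact IsIso.of_isIso_comp_left (φ.hom.app x) _
    haveI := key
    exact NatIso.isIso_of_isIso_app _
  -- (iv) → (ii)
  have h6 : IsIso (Functor.whiskerRight adjLR.unit F) → (∃ H : C ⥤ A, Nonempty (L ⋙ H ≅ F)) := by
    intro h
    exact ⟨R ⋙ F, ⟨(Functor.associator L R F).symm ≪≫ (asIso (Functor.whiskerRight adjLR.unit F)).symm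
      ≪≫ F.leftUnitor⟩⟩
  exact ⟨⟨fun hi => h6 (h3 (h1 hi)), fun hii => h2 (h4 (h5 hii))⟩,
    ⟨fun hii => h4 (h5 hii), fun hiii => h6 (h3 hiii)⟩, h3, h4⟩
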